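/- Let 𝕜 be ℝ or ℂ and 0 < p < ∞. For n ≥ 2 set a_n = (n−1)/n. Let (t_n)_{n≥2} be a bounded sequence in 𝕜 and let (k_j)_{j≥1} be a strictly increasing sequence of positive integers with k_1 > 2p. If for every j the absolutely convergent series ∑_{n=2}^∞ t_n a_n^{1/p} n^{-k_j/p} equals 0, then t_n = 0 for all n ≥ 2. -/
import Mathlib


open Filter Topology

/-- Let `𝕜` be `ℝ` or `ℂ` and `0 < p < ∞`.  For `n ≥ 2` set
`a n = (n-1)/n`.  Let `(t_n)_{n ≥ 2}` be a bounded sequence in `𝕜` and let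
`(k_j)_{j ≥ 1}` be a strictly increasing sequence of positive integers with
`k 1 > 2p`.  If for every `j ≥ 1` the (absolutely convergent) series
`∑_{n=2}^∞ t_n a_n^{1/p} n^{-k_j/p}` equals `0`, then `t n = 0` for all `n ≥ 2`. -/
theorem stmt1 {𝕜 : Type} [RCLike 𝕜] (p : ℝ) (hp : 0 < p)
    (t : ℕ → 𝕜) (ht : ∃ C : ℝ, ∀ n, ‖t n‖ ≤ C)
    (k : ℕ → ℕ) (hk : StrictMono k) (hkpos : ∀ j, 0 < k j)
    (hk1 : 2 * p < (k 1 : ℝ))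
    (hzero : ∀ j : ℕ, 1 ≤ j →
      ∑' n : {n : ℕ // 2 ≤ n},
        (((((n.1 : ℝ) - 1) / (n.1 : ℝ)) ^ (1 / p) * (n.1 : ℝ) ^ (-(k j : ℝ) / p) : ℝ)
          • t n.1) = 0) :
    ∀ n : ℕ, 2 ≤ n → t n = 0 := by
  obtain ⟨C, hC⟩ := ht
  have hC0 : 0 ≤ C := le_trans (norm_nonneg _) (hC 0)
  intro N
  induction N using Nat.strong_induction_on with
  | _ N IH =>
  intro hN
  -- notation
  set e1 : ℝ := (k 1 : ℝ) / p with he1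
  have he1gt : 2 < e1 := by
    rw [he1, lt_div_iff₀ hp]
    linarith
  have hNpos : (0:ℝ) < N := by positivity
  -- the mult factor
  set m : ℕ → ℝ := fun i => (N : ℝ) ^ ((k (i+1) : ℝ) / p) with hm
  -- F i n
  set F : ℕ → {n : ℕ // 2 ≤ n} → 𝕜 := fun i n =>
    m i • ((((((n.1 : ℝ) - 1) / (n.1 : ℝ)) ^ (1 / p) * (n.1 : ℝ) ^ (-(k (i+1) : ℝ) / p) : ℝ))
      • t n.1) with hF
  set g : {n : ℕ // 2 ≤ n} → 𝕜 := fun n =>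
    if n.1 = N then ((((N : ℝ) - 1) / (N : ℝ)) ^ (1 / p)) • t N else 0 with hg
  have hnpos : ∀ n : {n : ℕ // 2 ≤ n}, (0:ℝ) < n.1 := fun n => by
    have := n.2; positivity
  have hcle : ∀ n : {n : ℕ // 2 ≤ n},
      ((((n.1 : ℝ) - 1) / (n.1 : ℝ)) ^ (1 / p)) ≤ 1 := by
    intro n
    apply Real.rpow_le_one
    · apply div_nonneg _ (le_of_lt (hnpos n))
      have : (2:ℝ) ≤ n.1 := by exact_mod_cast n.2
      linarith
    · apply div_le_one_of_le₀ (by linarith) (le_of_lt (hnpos n))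
    · positivity
  have hcnonneg : ∀ n : {n : ℕ // 2 ≤ n},
      0 ≤ ((((n.1 : ℝ) - 1) / (n.1 : ℝ)) ^ (1 / p)) := by
    intro n
    apply Real.rpow_nonneg
    apply div_nonneg _ (le_of_lt (hnpos n))
    have : (2:ℝ) ≤ n.1 := by exact_mod_cast n.2
    linarith
  -- combined scalar equals (N/n)^(e_i) * c_n
  have hscal : ∀ (i : ℕ) (n : {n : ℕ // 2 ≤ n}),
      m i * ((((n.1 : ℝ) - 1) / (n.1 : ℝ)) ^ (1 / p) * (n.1 : ℝ) ^ (-(k (i+1) : ℝ) / p))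
      = ((N : ℝ) / n.1) ^ ((k (i+1) : ℝ) / p)
        * (((n.1 : ℝ) - 1) / (n.1 : ℝ)) ^ (1 / p) := by
    intro i n
    have h1 : ((N : ℝ) / n.1) ^ ((k (i+1) : ℝ) / p)
        = (N : ℝ) ^ ((k (i+1) : ℝ) / p) * ((n.1 : ℝ)) ^ (-((k (i+1) : ℝ) / p)) := by
      rw [Real.div_rpow (le_of_lt hNpos) (le_of_lt (hnpos n)), div_eq_mul_inv,
        Real.rpow_neg (le_of_lt (hnpos n))]
    rw [h1, hm]
    have : -(k (i+1) : ℝ) / p = -((k (i+1) : ℝ) / p) := by ring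
    rw [this]
    ring
  -- each tsum F i = 0
  have htsumF : ∀ i : ℕ, ∑' n, F i n = 0 := by
    intro i
    rw [hF]
    simp only
    rw [tsum_const_smul'' (m i), hzero (i+1) (Nat.le_add_left 1 i), smul_zero]
  -- bound
  set bound : {n : ℕ // 2 ≤ n} → ℝ := fun n => C * ((N : ℝ) / n.1) ^ e1 with hbound
  have hsum_bound : Summable bound := by
    have h1 : Summable (fun n : ℕ => ((n:ℝ) ^ (-e1))) := by
      rw [Real.summable_nat_rpow]
      linarith
    have h2 : Summable (fun n : ℕ => C * (N:ℝ) ^ e1 * ((n:ℝ) ^ (-e1))) := h1.mul_left _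
    apply Summable.of_nonneg_of_le (fun n => by positivity)
      (fun n => ?_) (h2.subtype _)
    rw [hbound]
    simp only
    rw [Real.div_rpow (le_of_lt hNpos) (le_of_lt (hnpos n)), div_eq_mul_inv,
      ← Real.rpow_neg (le_of_lt (hnpos n))]
    ring_nf
    exact le_refl _
  -- bound holds
  have h_bound : ∀ i : ℕ, ∀ n : {n : ℕ // 2 ≤ n}, ‖F i n‖ ≤ bound n := by
    intro i n
    rw [hF]
    simp only [smul_smul, norm_smul, Real.norm_eq_abs]
    rw [hscal i n]
    rcases lt_or_ge n.1 N with h | h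
    · have : t n.1 = 0 := IH n.1 h n.2
      rw [this, norm_zero, mul_zero, hbound]
      positivity
    · -- n ≥ N
      have hbase0 : (0:ℝ) < (N : ℝ) / n.1 := div_pos hNpos (hnpos n)
      have hbase1 : (N : ℝ) / n.1 ≤ 1 :=
        div_le_one_of_le₀ (by exact_mod_cast h) (le_of_lt (hnpos n))
      have hexp : e1 ≤ (k (i+1) : ℝ) / p := by
        rw [he1]
        gcongr
        exact_mod_cast hk.monotone (Nat.le_add_left 1 i)
      have h3 : ((N : ℝ) / n.1) ^ ((k (i+1) : ℝ) / p) ≤ ((N : ℝ) / n.1) ^ e1 :=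
        Real.rpow_le_rpow_of_exponent_ge hbase0 hbase1 hexp
      have h4 : |((N : ℝ) / ↑n.1) ^ ((k (i+1):ℝ) / p) * (((n.1:ℝ) - 1) / ↑n.1) ^ (1 / p)|
          = ((N : ℝ) / ↑n.1) ^ ((k (i+1):ℝ) / p) * (((n.1:ℝ) - 1) / ↑n.1) ^ (1 / p) := by
        apply abs_of_nonneg
        apply mul_nonneg (Real.rpow_nonneg (le_of_lt hbase0) _) (hcnonneg n)
      rw [h4, hbound]
      calc ((N:ℝ)/n.1) ^ ((k (i+1):ℝ)/p) * (((n.1:ℝ)-1)/n.1) ^ (1/p) * ‖t n.1‖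
          ≤ ((N:ℝ)/n.1) ^ e1 * 1 * C :=
            mul_le_mul (mul_le_mul h3 (hcle n) (hcnonneg n)
                (Real.rpow_nonneg hbase0.le _))
              (hC n.1) (norm_nonneg _) (by positivity)
        _ = C * ((N:ℝ)/n.1) ^ e1 := by ring
  -- pointwise limits
  have h_lim : ∀ n : {n : ℕ // 2 ≤ n}, Tendsto (fun i => F i n) atTop (𝓝 (g n)) := by
    intro n
    rcases lt_trichotomy n.1 N with h | h | h
    · have ht0 : t n.1 = 0 := IH n.1 h n.2
      have hgz : g n = 0 := by rw [hg]; simp [ne_of_lt h]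
      rw [hgz, show (fun i => F i n) = fun _ => (0:𝕜) from
        funext fun i => by rw [hF]; simp [ht0]]
      exact tendsto_const_nhds
    · -- n = N
      have hFn : ∀ i, F i n = ((((N : ℝ) - 1) / (N : ℝ)) ^ (1 / p)) • t N := by
        intro i
        rw [hF]
        simp only [smul_smul]
        rw [hscal i n, h]
        have : ((N : ℝ) / N) = 1 := div_self (ne_of_gt hNpos)
        rw [this, Real.one_rpow, one_mul]
      have : (fun i => F i n) = fun _ => ((((N : ℝ) - 1) / (N : ℝ)) ^ (1 / p)) • t N := by
        funext i; exact hFn i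
      rw [this, hg]
      simp only [h, if_true]
      exact tendsto_const_nhds
    · -- n > N
      have hgz : g n = 0 := by rw [hg]; simp [ne_of_gt h]
      rw [hgz]
      have hFn : ∀ i, F i n
          = (((N : ℝ) / n.1) ^ ((k (i+1) : ℝ) / p) * (((n.1:ℝ) - 1) / n.1) ^ (1/p)) • t n.1 := by
        intro i
        rw [hF]
        simp only [smul_smul]
        rw [hscal i n]
      have := fun i => hFn i
      rw [show (fun i => F i n) = fun i =>
        (((N : ℝ) / n.1) ^ ((k (i+1) : ℝ) / p) * (((n.1:ℝ) - 1) / n.1) ^ (1/p)) • t n.1 from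
        funext hFn]
      have h0 : Tendsto (fun i =>
          ((N : ℝ) / n.1) ^ ((k (i+1) : ℝ) / p) * (((n.1:ℝ) - 1) / n.1) ^ (1/p))
          atTop (𝓝 0) := by
      -- base < 1
        have hb0 : (0:ℝ) < (N : ℝ) / n.1 := div_pos hNpos (hnpos n)
        have hb1 : (N : ℝ) / n.1 < 1 :=
          (div_lt_one (hnpos n)).mpr (by exact_mod_cast h)
        have hb : Tendsto (fun x : ℝ => ((N : ℝ) / n.1) ^ x) atTop (𝓝 0) :=
          tendsto_rpow_atTop_of_base_lt_one _ (by linarith) hb1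
        have he : Tendsto (fun i => (k (i+1) : ℝ) / p) atTop atTop := by
          apply Tendsto.atTop_div_const hp
          apply tendsto_natCast_atTop_atTop.comp
          exact (hk.comp (fun a b hab => Nat.add_lt_add_right hab 1)).tendsto_atTop
        have := hb.comp he
        have h00 : Tendsto (fun i => ((N : ℝ) / n.1) ^ ((k (i+1) : ℝ) / p)) atTop (𝓝 0) := this
        have := h00.mul_const ((((n.1:ℝ) - 1) / n.1) ^ (1/p))
        rwa [zero_mul] at this
      have := h0.smul_const (t n.1)
      rwa [zero_smul] at this
  -- dominated convergence
  have hmain : Tendsto (fun i => ∑' n, F i n) atTop (𝓝 (∑' n, g n)) :=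
    tendsto_tsum_of_dominated_convergence hsum_bound h_lim
      (Eventually.of_forall h_bound)
  have hconst : Tendsto (fun i : ℕ => (0 : 𝕜)) atTop (𝓝 (∑' n, g n)) := by
    have : (fun i => ∑' n, F i n) = fun i : ℕ => (0 : 𝕜) := funext htsumF
    rwa [this] at hmain
  have hgsum0 : ∑' n, g n = 0 := tendsto_nhds_unique tendsto_const_nhds hconst |>.symm
  -- tsum g = c_N • t N
  have hsingle : ∑' n, g n = ((((N : ℝ) - 1) / (N : ℝ)) ^ (1 / p)) • t N := by
    have : g ⟨N, hN⟩ = ((((N : ℝ) - 1) / (N : ℝ)) ^ (1 / p)) • t N := by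
      rw [hg]; simp
    rw [← this]
    apply tsum_eq_single
    intro b hb
    rw [hg]
    have : b.1 ≠ N := fun hbN => hb (Subtype.ext hbN)
    simp [this]
  rw [hsingle] at hgsum0
  have hcpos : (0:ℝ) < (((N : ℝ) - 1) / (N : ℝ)) ^ (1 / p) := by
    apply Real.rpow_pos_of_pos
    apply div_pos _ hNpos
    have : (2:ℝ) ≤ N := by exact_mod_cast hN
    linarith
  rcases smul_eq_zero.mp hgsum0 with h | h
  · exact absurd h (ne_of_gt hcpos)
  · exact h
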